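/- arXiv:2506.18509 — 2 statements merged into one kernel-verified Lean document; each statement's English description precedes it below -/
import Mathlib

section
/- For fixed n ≥ 1, there is a polynomial P_n with nonnegative integer coefficients and degree 2^{n-1} such that λ(n,ε) = P_n(1/ε) for all ε ∈ (0,1]. -/
noncomputable def lam : ℕ → ℝ → ℝ
  | 0, _ => 0
  | 1, ε => 2 / ε
  | (n+2), ε =>
      (((n+2) * (n+3) : ℕ) : ℝ) / ε + lam (n+1) (ε ^ 2 / (((n+2) * (n+3) : ℕ) : ℝ))

lemma key (m : ℕ) : ∃ Q : Polynomial ℕ,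
    (Q.map (Nat.castRingHom ℝ)).natDegree = 2 ^ m ∧
    ∀ ε : ℝ, 0 < ε → ε ≤ 1 →
      lam (m+1) ε = (Q.map (Nat.castRingHom ℝ)).eval (1 / ε) := by
  induction m with
  | zero =>
      refine ⟨Polynomial.C 2 * Polynomial.X, ?_, ?_⟩
      · simp [Polynomial.natDegree_C_mul]
      · intro ε hε hε1
        simp [lam, div_eq_mul_inv, one_div, mul_comm]
  | succ m ih =>
      obtain ⟨Q, hdeg, heval⟩ := ih
      set c : ℕ := (m+2) * (m+3) with hc
      refine ⟨Polynomial.C c * Polynomial.X + Q.comp (Polynomial.C c * Polynomial.X ^ 2), ?_, ?_⟩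
      · have hc0 : (c : ℝ) ≠ 0 := by positivity
        rw [Polynomial.map_add, Polynomial.map_comp]
        have h1 : ((Polynomial.C c * Polynomial.X : Polynomial ℕ).map
            (Nat.castRingHom ℝ)) = Polynomial.C (c : ℝ) * Polynomial.X := by
          simp
        have h2 : ((Polynomial.C c * Polynomial.X ^ 2 : Polynomial ℕ).map
            (Nat.castRingHom ℝ)) = Polynomial.C (c : ℝ) * Polynomial.X ^ 2 := by
          simp
        rw [h1, h2]
        have hdq : ((Q.map (Nat.castRingHom ℝ)).comp
            (Polynomial.C (c : ℝ) * Polynomial.X ^ 2)).natDegree = 2 ^ (m + 1) := by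
          rw [Polynomial.natDegree_comp, hdeg]
          rw [Polynomial.natDegree_C_mul hc0, Polynomial.natDegree_X_pow]
          ring
        have hlt : (Polynomial.C (c : ℝ) * Polynomial.X).natDegree <
            ((Q.map (Nat.castRingHom ℝ)).comp
              (Polynomial.C (c : ℝ) * Polynomial.X ^ 2)).natDegree := by
          rw [hdq, Polynomial.natDegree_C_mul hc0, Polynomial.natDegree_X]
          exact Nat.one_lt_two_pow_iff.mpr (Nat.succ_ne_zero m)
        rw [Polynomial.natDegree_add_eq_right_of_natDegree_lt hlt, hdq]
      · intro ε hε hε1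
        have hc0 : (0:ℝ) < (c : ℝ) := by positivity
        have hc1 : (1:ℝ) ≤ (c : ℝ) := by
          exact_mod_cast Nat.one_le_iff_ne_zero.mpr (by positivity)
        have hδ0 : 0 < ε ^ 2 / (c : ℝ) := by positivity
        have hδ1 : ε ^ 2 / (c : ℝ) ≤ 1 := by
          rw [div_le_one hc0]
          calc ε ^ 2 ≤ 1 := by nlinarith
          _ ≤ (c:ℝ) := hc1
        have hlam : lam (m + 2) ε =
            ((m+2) * (m+3) : ℕ) / ε + lam (m+1) (ε ^ 2 / (((m+2) * (m+3) : ℕ) : ℝ)) := rfl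
        rw [hlam, heval _ hδ0 hδ1]
        rw [Polynomial.map_add, Polynomial.map_comp, Polynomial.eval_add,
          Polynomial.eval_comp]
        simp only [Polynomial.map_mul, Polynomial.map_pow, Polynomial.map_natCast,
          Polynomial.map_X, Polynomial.eval_mul, Polynomial.eval_pow, Polynomial.eval_X]
        have e1 : 1 / (ε ^ 2 / (c : ℝ)) = (c:ℝ) * (1/ε)^2 := by
          field_simp
        have hcast : ((Polynomial.C c : Polynomial ℕ).map (Nat.castRingHom ℝ)) =
            Polynomial.C (c : ℝ) := by simp
        rw [hcast]
        simp only [Polynomial.eval_C]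
        rw [e1]
        congr 1
        rw [hc]
        push_cast
        ring

theorem stmt2 (n : ℕ) (hn : 1 ≤ n) :
    ∃ P : Polynomial ℝ, (∀ k, ∃ m : ℕ, P.coeff k = (m : ℝ)) ∧
      P.natDegree = 2 ^ (n - 1) ∧
      ∀ ε : ℝ, 0 < ε → ε ≤ 1 → lam n ε = P.eval (1 / ε) := by
  obtain ⟨m, rfl⟩ := Nat.exists_eq_add_of_le hn
  obtain ⟨Q, hdeg, heval⟩ := key m
  refine ⟨Q.map (Nat.castRingHom ℝ), fun k => ⟨Q.coeff k, by simp⟩, ?_, ?_⟩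
  · simpa using hdeg
  · simpa [Nat.add_comm] using heval
end

section
/- Let Q ⊂ ℝ² be a convex body whose projection to the first coordinate is the interval [p₁,p₂] with p₁ < p₂, and let p = λ₁p₁ + λ₂p₂ with λ₁,λ₂ > 0, λ₁+λ₂ = 1. Suppose Q ∩ {x₁ = p} is a segment of length w₀, and the minimum and maximum of the second coordinate on Q are both attained on the line {x₁ = p₂} (or both on {x₁ = p₁}). Then the length of the projection of Q to the second coordinate is at most w₀/min(λ₁,λ₂). -/
lemma key5 (Q : Set (ℝ × ℝ)) (hQc : IsCompact Q) (hQconv : Convex ℝ Q)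
    (a b c : ℝ × ℝ) (ha : a ∈ Q) (hb : b ∈ Q) (hc : c ∈ Q)
    (t : ℝ) (ht0 : 0 < t) (ht1 : t ≤ 1) (hab : a.1 = b.1)
    (p : ℝ) (hp : p = (1 - t) * c.1 + t * a.1) :
    t * (b.2 - a.2) ≤ sSup (Prod.snd '' {q ∈ Q | q.1 = p}) -
      sInf (Prod.snd '' {q ∈ Q | q.1 = p}) := by
  set u : ℝ × ℝ := (1 - t) • c + t • a with hu
  set v : ℝ × ℝ := (1 - t) • c + t • b with hv
  have huQ : u ∈ Q := hQconv hc ha (by linarith) (le_of_lt ht0) (by ring)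
  have hvQ : v ∈ Q := hQconv hc hb (by linarith) (le_of_lt ht0) (by ring)
  have hu1 : u.1 = p := by simp [hu, hp]
  have hv1 : v.1 = p := by simp [hv, hp, hab]
  have huS : u.2 ∈ Prod.snd '' {q ∈ Q | q.1 = p} := ⟨u, ⟨huQ, hu1⟩, rfl⟩
  have hvS : v.2 ∈ Prod.snd '' {q ∈ Q | q.1 = p} := ⟨v, ⟨hvQ, hv1⟩, rfl⟩
  have hScomp : IsCompact (Prod.snd '' {q ∈ Q | q.1 = p}) := by
    apply IsCompact.image _ continuous_snd
    exact hQc.inter_right (isClosed_singleton.preimage continuous_fst)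
  have hbdd : BddAbove (Prod.snd '' {q ∈ Q | q.1 = p}) := hScomp.bddAbove
  have hbdd' : BddBelow (Prod.snd '' {q ∈ Q | q.1 = p}) := hScomp.bddBelow
  have h1 : v.2 ≤ sSup (Prod.snd '' {q ∈ Q | q.1 = p}) := le_csSup hbdd hvS
  have h2 : sInf (Prod.snd '' {q ∈ Q | q.1 = p}) ≤ u.2 := csInf_le hbdd' huS
  have hv2 : v.2 = (1 - t) * c.2 + t * b.2 := rfl
  have hu2 : u.2 = (1 - t) * c.2 + t * a.2 := rfl
  nlinarith [h1, h2]

theorem stmt5 (Q : Set (ℝ × ℝ)) (hQne : Q.Nonempty) (hQc : IsCompact Q)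
    (hQconv : Convex ℝ Q)
    (p₁ p₂ : ℝ) (hp : p₁ < p₂) (hproj : Prod.fst '' Q = Set.Icc p₁ p₂)
    (l₁ l₂ : ℝ) (hl₁ : 0 < l₁) (hl₂ : 0 < l₂) (hl : l₁ + l₂ = 1)
    (p : ℝ) (hpdef : p = l₁ * p₁ + l₂ * p₂)
    (w₀ : ℝ)
    (hw₀ : sSup (Prod.snd '' {q ∈ Q | q.1 = p}) -
           sInf (Prod.snd '' {q ∈ Q | q.1 = p}) = w₀)
    (hattain :
      (∃ a ∈ Q, ∃ b ∈ Q, a.1 = p₂ ∧ b.1 = p₂ ∧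
        a.2 = sInf (Prod.snd '' Q) ∧ b.2 = sSup (Prod.snd '' Q)) ∨
      (∃ a ∈ Q, ∃ b ∈ Q, a.1 = p₁ ∧ b.1 = p₁ ∧
        a.2 = sInf (Prod.snd '' Q) ∧ b.2 = sSup (Prod.snd '' Q))) :
    sSup (Prod.snd '' Q) - sInf (Prod.snd '' Q) ≤ w₀ / min l₁ l₂ := by
  have hmin : 0 < min l₁ l₂ := lt_min hl₁ hl₂
  have hQ2 : IsCompact (Prod.snd '' Q) := hQc.image continuous_snd
  obtain (⟨a, ha, b, hb, ha1, hb1, ha2, hb2⟩ | ⟨a, ha, b, hb, ha1, hb1, ha2, hb2⟩) := hattain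
  · -- extremes on x₁ = p₂; take c with c.1 = p₁
    have hc' : p₁ ∈ Prod.fst '' Q := by rw [hproj]; exact ⟨le_refl _, le_of_lt hp⟩
    obtain ⟨c, hc, hc1⟩ := hc'
    have hkey := key5 Q hQc hQconv a b c ha hb hc l₂ hl₂ (by linarith)
      (ha1.trans hb1.symm) p (by rw [hpdef, hc1, ha1]; linear_combination p₁ * hl)
    rw [hw₀] at hkey
    have hmm : a.2 ≤ b.2 := ha2 ▸ csInf_le hQ2.bddBelow ⟨b, hb, rfl⟩
    rw [← ha2, ← hb2, le_div_iff₀ hmin]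
    nlinarith [min_le_right l₁ l₂]
  · have hc' : p₂ ∈ Prod.fst '' Q := by rw [hproj]; exact ⟨le_of_lt hp, le_refl _⟩
    obtain ⟨c, hc, hc1⟩ := hc'
    have hkey := key5 Q hQc hQconv a b c ha hb hc l₁ hl₁ (by linarith)
      (ha1.trans hb1.symm) p (by rw [hpdef, hc1, ha1]; linear_combination p₂ * hl)
    rw [hw₀] at hkey
    have hmm : a.2 ≤ b.2 := ha2 ▸ csInf_le hQ2.bddBelow ⟨b, hb, rfl⟩
    rw [← ha2, ← hb2, le_div_iff₀ hmin]
    nlinarith [min_le_left l₁ l₂]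
end
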